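/- Let n be odd and let S = [[T₊,R₋],[R₊,T₋]] be a 2n×2n unitary matrix with R₊ skew-symmetric. If ‖T₊‖ ≤ ε (operator norm), then ε ≥ 1. Equivalently, the transmission block T₊ of an odd-dimensional FTR-symmetric scattering matrix has operator norm at least 1 (hence exactly 1). -/

import Mathlib

open Matrix

/-- Obstruction to Anderson localization: for `n` odd and a unitary `2n×2n` scattering
matrix `S = [[T₊,R₋],[R₊,T₋]]` with `R₊` skew-symmetric, if the operator norm of the
transmission block `T₊` is at most `ε`, then `ε ≥ 1`. -/
theorem transmission_opNorm_ge_one (n : ℕ) (hn : Odd n)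
    (Tp Rm Rp Tm : Matrix (Fin n) (Fin n) ℂ)
    (hS : Matrix.fromBlocks Tp Rm Rp Tm ∈ Matrix.unitaryGroup (Fin n ⊕ Fin n) ℂ)
    (hRp : Rpᵀ = -Rp)
    (ε : ℝ)
    (hT : ‖(Matrix.toEuclideanCLM (𝕜 := ℂ) (n := Fin n)) Tp‖ ≤ ε) :
    1 ≤ ε := by
  -- `det Rp = 0` since `Rp` is skew-symmetric and `n` is odd
  have hdet : Rp.det = 0 := by
    have h1 : Rp.det = (-Rp).det := by rw [← hRp, Matrix.det_transpose]
    rw [Matrix.det_neg, Fintype.card_fin, hn.neg_one_pow] at h1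
    linear_combination (1/2 : ℂ) * h1
  -- choose a nonzero vector in the kernel of `Rp`
  obtain ⟨v, hv0, hv⟩ := (Matrix.exists_mulVec_eq_zero_iff).mpr hdet
  -- unitarity gives `Tpᴴ * Tp + Rpᴴ * Rp = 1`
  have hU : star (Matrix.fromBlocks Tp Rm Rp Tm) * Matrix.fromBlocks Tp Rm Rp Tm = 1 := hS.1
  have hblock : Tpᴴ * Tp + Rpᴴ * Rp = 1 := by
    rw [Matrix.star_eq_conjTranspose, Matrix.fromBlocks_conjTranspose,
      Matrix.fromBlocks_multiply, ← Matrix.fromBlocks_one (l := Fin n) (m := Fin n)] at hU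
    exact (Matrix.fromBlocks_inj.mp hU).1
  -- hence `(Tpᴴ * Tp).mulVec v = v`
  have hTv : (Tpᴴ * Tp).mulVec v = v := by
    have h := congrArg (fun M => M.mulVec v) hblock
    simpa [Matrix.add_mulVec, Matrix.mulVec_mulVec, hv,
      Matrix.one_mulVec, ← Matrix.mulVec_mulVec] using h
  -- work in Euclidean space
  set T := (Matrix.toEuclideanCLM (𝕜 := ℂ) (n := Fin n)) Tp with hTdef
  set w : EuclideanSpace ℂ (Fin n) := (WithLp.equiv 2 (Fin n → ℂ)).symm v with hw
  have hw0 : w ≠ 0 := by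
    intro h0
    apply hv0
    have := congrArg (WithLp.equiv 2 (Fin n → ℂ)) h0
    simpa [hw] using this
  have hTTw : (Matrix.toEuclideanCLM (𝕜 := ℂ) (n := Fin n)) (Tpᴴ * Tp) w = w := by
    rw [hw, WithLp.equiv_symm_apply, Matrix.toEuclideanCLM_toLp]
    simp [Matrix.toLin'_apply, hTv]
  have hinner : (inner ℂ (T w) (T w) : ℂ) = inner ℂ w w := by
    have hadj : ContinuousLinearMap.adjoint T =
        (Matrix.toEuclideanCLM (𝕜 := ℂ) (n := Fin n)) Tpᴴ := by
      rw [hTdef, ← ContinuousLinearMap.star_eq_adjoint, ← map_star]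
      rfl
    calc (inner ℂ (T w) (T w) : ℂ) = inner ℂ w (ContinuousLinearMap.adjoint T (T w)) :=
          (ContinuousLinearMap.adjoint_inner_right T w (T w)).symm
      _ = inner ℂ w w := by
          rw [hadj]
          congr 1
          have : (Matrix.toEuclideanCLM (𝕜 := ℂ) (n := Fin n)) Tpᴴ (T w)
              = (Matrix.toEuclideanCLM (𝕜 := ℂ) (n := Fin n)) (Tpᴴ * Tp) w := by
            rw [_root_.map_mul]; rfl
          rw [this, hTTw]
  have hnorm : ‖T w‖ = ‖w‖ := by
    rw [inner_self_eq_norm_sq_to_K, inner_self_eq_norm_sq_to_K] at hinner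
    have h2 : ‖T w‖ ^ 2 = ‖w‖ ^ 2 := by exact_mod_cast hinner
    nlinarith [norm_nonneg (T w), norm_nonneg w]
  have hle : ‖w‖ ≤ ε * ‖w‖ := by
    calc ‖w‖ = ‖T w‖ := hnorm.symm
      _ ≤ ‖T‖ * ‖w‖ := T.le_opNorm w
      _ ≤ ε * ‖w‖ := by
          exact mul_le_mul_of_nonneg_right hT (norm_nonneg w)
  have hwpos : 0 < ‖w‖ := norm_pos_iff.mpr hw0
  nlinarith
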